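/- Let X be a locally compact non-compact abelian group and let H, K be Banach X-modules over the group X, regarded as Banach modules with their canonical multiplier algebras M(H) and M(K). If T ∈ B(H,K) is of class C^u(Q;H,K), then T is decay preserving: T∘M ∈ B₀ˡ(H,K) for every M ∈ M(H) and M∘T ∈ B₀ʳ(H,K) for every M ∈ M(K). -/

import Mathlib

open ContinuousLinearMap

noncomputable section

/-- The space of continuous antilinear forms on `G` (the "adjoint space" `G*`). -/
abbrev AntiDual (G : Type*) [NormedAddCommGroup G] [NormedSpace ℂ G] : Type _ :=
  G →SL[starRingEnd ℂ] ℂ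

/-- Precomposition with `D : G →L E`, as a map `E* →L G*`; this is the adjoint `D*`. -/
def precompAntiDual {G E : Type*} [NormedAddCommGroup G] [NormedSpace ℂ G]
    [NormedAddCommGroup E] [NormedSpace ℂ E] (D : G →L[ℂ] E) :
    AntiDual E →L[ℂ] AntiDual G :=
  LinearMap.mkContinuous
    { toFun := fun w => w.comp D
      map_add' := fun w₁ w₂ => by ext u; simp
      map_smul' := fun c w => by ext u; simp }
    ‖D‖ (fun w => by
      calc ‖w.comp D‖ ≤ ‖w‖ * ‖D‖ := opNorm_comp_le _ _
      _ = ‖D‖ * ‖w‖ := mul_comm _ _)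

/-- Auxiliary: the element of the double antidual associated to `u`. -/
def doubleAntiDualAux {H : Type*} [NormedAddCommGroup H] [NormedSpace ℂ H] (u : H) :
    AntiDual (AntiDual H) :=
  LinearMap.mkContinuous
    { toFun := fun w : AntiDual H => starRingEnd ℂ (w u)
      map_add' := fun w₁ w₂ => by simp
      map_smul' := fun c w => by simp }
    ‖u‖ (fun w => by
      simp only [LinearMap.coe_mk, AddHom.coe_mk]
      calc ‖starRingEnd ℂ (w u)‖ = ‖w u‖ := by simp
      _ ≤ ‖w‖ * ‖u‖ := w.le_opNorm u
      _ = ‖u‖ * ‖w‖ := mul_comm _ _)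

theorem doubleAntiDualAux_norm_le {H : Type*} [NormedAddCommGroup H] [NormedSpace ℂ H]
    (u : H) : ‖doubleAntiDualAux u‖ ≤ ‖u‖ :=
  LinearMap.mkContinuous_norm_le _ (norm_nonneg u) _

/-- The canonical embedding of `H` into its double antidual `H**`,
`⟨v, u⟩ = conj ⟨u, v⟩`. -/
def doubleAntiDualEmb (H : Type*) [NormedAddCommGroup H] [NormedSpace ℂ H] :
    H →L[ℂ] AntiDual (AntiDual H) :=
  LinearMap.mkContinuous
    { toFun := fun u => doubleAntiDualAux u
      map_add' := fun u₁ u₂ => by ext w; simp [doubleAntiDualAux]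
      map_smul' := fun c u => by ext w; simp [doubleAntiDualAux] }
    1 (fun u => by simpa using doubleAntiDualAux_norm_le u)

/-- A Banach `X`-module over the group `X`: a strongly continuous representation of the
dual group by bounded invertible operators. -/
structure GroupRep (Xd : Type*) [Monoid Xd] [TopologicalSpace Xd]
    (H : Type*) [NormedAddCommGroup H] [NormedSpace ℂ H] where
  V : Xd →* (H →L[ℂ] H)ˣ
  strong_cont : ∀ u : H, Continuous fun k : Xd => (↑(V k) : H →L[ℂ] H) u

/-- The regularity class `C^u(Q; H, K)`: norm continuity of `k ↦ V_k⁻¹ S V_k`. -/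
def CuClass {Xd : Type*} [Monoid Xd] [TopologicalSpace Xd]
    {H K : Type*} [NormedAddCommGroup H] [NormedSpace ℂ H]
    [NormedAddCommGroup K] [NormedSpace ℂ K]
    (WH : GroupRep Xd H) (WK : GroupRep Xd K) (S : H →L[ℂ] K) : Prop :=
  Continuous fun k : Xd =>
    (↑(WK.V k)⁻¹ : K →L[ℂ] K).comp (S.comp (↑(WH.V k) : H →L[ℂ] H))


variable {H K : Type*}

/-- `M` is the multiplier algebra of a Banach module structure on `H`: a non-degenerate
norm-closed subalgebra of `B(H)` possessing a bounded approximate unit. -/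
structure IsBanachModule (H : Type*) [NormedAddCommGroup H] [NormedSpace ℂ H]
    (M : Set (H →L[ℂ] H)) : Prop where
  zero_mem : (0 : H →L[ℂ] H) ∈ M
  add_mem : ∀ {A B : H →L[ℂ] H}, A ∈ M → B ∈ M → A + B ∈ M
  smul_mem : ∀ (c : ℂ) {A : H →L[ℂ] H}, A ∈ M → c • A ∈ M
  mul_mem : ∀ {A B : H →L[ℂ] H}, A ∈ M → B ∈ M → A.comp B ∈ M
  isClosed : IsClosed M
  nondegenerate : Dense (↑(Submodule.span ℂ {u : H | ∃ A ∈ M, ∃ v : H, u = A v}) : Set H)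
  approx_unit : ∃ C : ℝ, ∀ ε > (0 : ℝ), ∀ F : Finset (H →L[ℂ] H), ↑F ⊆ M →
    ∃ J ∈ M, ‖J‖ ≤ C ∧ ∀ A ∈ F, ‖J.comp A - A‖ ≤ ε ∧ ‖A.comp J - A‖ ≤ ε

/-- A Hilbert module: a Banach module on a Hilbert space whose multiplier algebra is a
C*-algebra of operators (i.e. is moreover closed under adjoints). -/
structure IsHilbertModule (H : Type*) [NormedAddCommGroup H] [InnerProductSpace ℂ H]
    [CompleteSpace H] (M : Set (H →L[ℂ] H)) extends IsBanachModule H M : Prop where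
  star_mem : ∀ {A : H →L[ℂ] H}, A ∈ M → ContinuousLinearMap.adjoint A ∈ M

/-- `B₀ˡ(H,K)`: the closed linear span of the operators `A ∘ T` with `A` in the multiplier
algebra of `K` and `T ∈ B(H,K)` (operators left vanishing at infinity). -/
def B0l [NormedAddCommGroup H] [NormedSpace ℂ H] [NormedAddCommGroup K] [NormedSpace ℂ K]
    (MK : Set (K →L[ℂ] K)) : Set (H →L[ℂ] K) :=
  closure (↑(Submodule.span ℂ
    {S : H →L[ℂ] K | ∃ A ∈ MK, ∃ T : H →L[ℂ] K, S = A.comp T}) : Set (H →L[ℂ] K))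

/-- `B₀ʳ(H,K)`: the closed linear span of the operators `T ∘ A` with `A` in the multiplier
algebra of `H` and `T ∈ B(H,K)` (operators right vanishing at infinity). -/
def B0r [NormedAddCommGroup H] [NormedSpace ℂ H] [NormedAddCommGroup K] [NormedSpace ℂ K]
    (MH : Set (H →L[ℂ] H)) : Set (H →L[ℂ] K) :=
  closure (↑(Submodule.span ℂ
    {S : H →L[ℂ] K | ∃ A ∈ MH, ∃ T : H →L[ℂ] K, S = T.comp A}) : Set (H →L[ℂ] K))

/-- `S ∈ B(H,K)` is left decay preserving. -/
def LeftDecayPreserving [NormedAddCommGroup H] [NormedSpace ℂ H] [NormedAddCommGroup K]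
    [NormedSpace ℂ K] (MH : Set (H →L[ℂ] H)) (MK : Set (K →L[ℂ] K))
    (S : H →L[ℂ] K) : Prop :=
  ∀ A ∈ MH, S.comp A ∈ B0l MK

/-- `S ∈ B(H,K)` is right decay preserving. -/
def RightDecayPreserving [NormedAddCommGroup H] [NormedSpace ℂ H] [NormedAddCommGroup K]
    [NormedSpace ℂ K] (MH : Set (H →L[ℂ] H)) (MK : Set (K →L[ℂ] K))
    (S : H →L[ℂ] K) : Prop :=
  ∀ A ∈ MK, A.comp S ∈ B0r MH

open MeasureTheory

/-- The canonical multiplier algebra of a Banach `X`-module over the group `X`: the norm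
closure of the set of operators `ψ(V) = ∫ ψ(k) V_k dk`, `ψ ∈ L¹` with compact support. -/
def repMult {Xd : Type*} [Monoid Xd] [TopologicalSpace Xd] [MeasurableSpace Xd]
    {H : Type*} [NormedAddCommGroup H] [NormedSpace ℂ H] [CompleteSpace H]
    (W : GroupRep Xd H) (μ : Measure Xd) : Set (H →L[ℂ] H) :=
  closure {A : H →L[ℂ] H | ∃ ψ : Xd → ℂ, Integrable ψ μ ∧ HasCompactSupport ψ ∧
    ∀ u : H, A u = ∫ k, ψ k • ((↑(W.V k) : H →L[ℂ] H) u) ∂μ}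

section Auxiliary

open Set Filter Topology

/-- Summing indicators over a disjoint family covering the support gives back the function. -/
lemma sum_indicator_eq {α M : Type*} [AddCommMonoid M] {n : ℕ} {Ω : Fin n → Set α}
    (hdisj : ∀ i j, i ≠ j → Disjoint (Ω i) (Ω j)) {φ : α → M} {Q : Set α}
    (hsupp : ∀ x, φ x ≠ 0 → x ∈ Q) (hcov : Q ⊆ ⋃ i, Ω i) (k : α) :
    ∑ i, (Ω i).indicator φ k = φ k := by
  by_cases hk : φ k = 0
  · rw [hk]
    apply Finset.sum_eq_zero
    intro i _
    by_cases h : k ∈ Ω i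
    · rw [Set.indicator_of_mem h, hk]
    · exact Set.indicator_of_notMem h _
  · obtain ⟨i, hi⟩ := Set.mem_iUnion.mp (hcov (hsupp k hk))
    rw [Finset.sum_eq_single i]
    · exact Set.indicator_of_mem hi _
    · intro j _ hj
      refine Set.indicator_of_notMem (fun hkj => ?_) _
      exact Set.disjoint_left.mp (hdisj j i hj) hkj hi
    · intro h; exact absurd (Finset.mem_univ i) h

/-- Partition of the (compact) support of `ψ` into measurable pieces on which a given
continuous function has oscillation at most `δ`. -/
lemma exists_partition {Xd : Type*} [TopologicalSpace Xd] [MeasurableSpace Xd] [BorelSpace Xd]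
    {β : Type*} [NormedAddCommGroup β]
    {ψ : Xd → ℂ} (hQ : IsCompact (tsupport ψ)) {f : Xd → β} (hf : Continuous f)
    {δ : ℝ} (hδ : 0 < δ) :
    ∃ (n : ℕ) (p : Fin n → Xd) (Ω : Fin n → Set Xd),
      (∀ i, MeasurableSet (Ω i)) ∧ (∀ i, Ω i ⊆ tsupport ψ) ∧ (∀ i, p i ∈ tsupport ψ) ∧
      (∀ i j, i ≠ j → Disjoint (Ω i) (Ω j)) ∧ (tsupport ψ ⊆ ⋃ i, Ω i) ∧
      (∀ i, ∀ x ∈ Ω i, ‖f x - f (p i)‖ ≤ δ) := by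
  classical
  set Q := tsupport ψ with hQdef
  have hQm : MeasurableSet Q := (isClosed_tsupport ψ).measurableSet
  set U : Q → Set Xd := fun x => f ⁻¹' Metric.ball (f (x : Xd)) δ with hU
  have hUo : ∀ x, IsOpen (U x) := fun x => Metric.isOpen_ball.preimage hf
  have hUcov : Q ⊆ ⋃ x : Q, U x := fun x hx =>
    Set.mem_iUnion.mpr ⟨⟨x, hx⟩, by simp [hU, Metric.mem_ball, hδ]⟩
  obtain ⟨t, ht⟩ := hQ.elim_finite_subcover U hUo hUcov
  set n := t.card with hn
  set e : Fin n → Q := fun i => (t.equivFin.symm i : Q) with he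
  set Ω : Fin n → Set Xd := fun i =>
    (Q ∩ U (e i)) \ ⋃ j, ⋃ (_ : j < i), U (e j) with hΩ
  have key : ∀ i j, i < j → ∀ x, x ∈ Ω i → x ∈ Ω j → False := by
    intro i j hij x hxi hxj
    exact hxj.2 (Set.mem_iUnion.mpr ⟨i, Set.mem_iUnion.mpr ⟨hij, hxi.1.2⟩⟩)
  refine ⟨n, fun i => (e i : Xd), Ω, ?_, ?_, fun i => (e i).2, ?_, ?_, ?_⟩
  · intro i
    exact (hQm.inter (hUo _).measurableSet).diff
      (MeasurableSet.iUnion fun j => MeasurableSet.iUnion fun _ => (hUo _).measurableSet)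
  · intro i x hx; exact hx.1.1
  · intro i j hij
    refine Set.disjoint_left.mpr fun x hxi hxj => ?_
    rcases lt_or_gt_of_ne hij with h | h
    · exact key i j h x hxi hxj
    · exact key j i h x hxj hxi
  · intro x hx
    have hx' := ht hx
    rw [Set.mem_iUnion₂] at hx'
    obtain ⟨y, hyt, hxy⟩ := hx'
    set s : Finset (Fin n) := Finset.univ.filter (fun i => x ∈ U (e i)) with hs
    have hne : s.Nonempty := by
      refine ⟨t.equivFin ⟨y, hyt⟩, Finset.mem_filter.mpr ⟨Finset.mem_univ _, ?_⟩⟩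
      have : e (t.equivFin ⟨y, hyt⟩) = y := by
        simp [he, Equiv.symm_apply_apply]
      rw [this]; exact hxy
    set i₀ := s.min' hne with hi₀
    refine Set.mem_iUnion.mpr ⟨i₀, ⟨⟨hx, ?_⟩, ?_⟩⟩
    · have := s.min'_mem hne
      rw [Finset.mem_filter] at this
      exact this.2
    · intro hmem
      obtain ⟨j, hj⟩ := Set.mem_iUnion.mp hmem
      obtain ⟨hji, hxj⟩ := Set.mem_iUnion.mp hj
      exact absurd (s.min'_le j (Finset.mem_filter.mpr ⟨Finset.mem_univ _, hxj⟩))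
        (not_le.mpr hji)
  · intro i x hx
    have : x ∈ U (e i) := hx.1.2
    have := Metric.mem_ball.mp this
    rw [dist_eq_norm] at this
    exact this.le

/-- Uniform bound of a strongly continuous representation on a compact set. -/
lemma GroupRep.bound {Xd E : Type*} [Monoid Xd] [TopologicalSpace Xd]
    [NormedAddCommGroup E] [NormedSpace ℂ E] [CompleteSpace E]
    (W : GroupRep Xd E) {Q : Set Xd} (hQ : IsCompact Q) :
    ∃ c : ℝ, 0 ≤ c ∧ ∀ k ∈ Q, ‖(↑(W.V k) : E →L[ℂ] E)‖ ≤ c := by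
  have hpt : ∀ u : E, ∃ c, ∀ k : Q, ‖(↑(W.V (k : Xd)) : E →L[ℂ] E) u‖ ≤ c := by
    intro u
    obtain ⟨c, hc⟩ := (hQ.image (W.strong_cont u).norm).bddAbove
    exact ⟨c, fun k => hc (Set.mem_image_of_mem _ k.2)⟩
  obtain ⟨c, hc⟩ := banach_steinhaus
    (g := fun k : Q => (↑(W.V (k : Xd)) : E →L[ℂ] E)) hpt
  exact ⟨max c 0, le_max_right _ _, fun k hk => le_trans (hc ⟨k, hk⟩) (le_max_left _ _)⟩

lemma norm_smul_le_of_bound {Xd E : Type*} [TopologicalSpace Xd]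
    [NormedAddCommGroup E] [NormedSpace ℂ E]
    {ψ : Xd → ℂ} {g : Xd → E} {c : ℝ}
    (h : ∀ k ∈ tsupport ψ, ‖g k‖ ≤ c) (k : Xd) : ‖ψ k • g k‖ ≤ ‖ψ k‖ * c := by
  by_cases hk : k ∈ tsupport ψ
  · rw [norm_smul]
    exact mul_le_mul_of_nonneg_left (h k hk) (norm_nonneg _)
  · simp [image_eq_zero_of_notMem_tsupport hk]

/-- Integrability of `k ↦ ψ k • g k` for `g` continuous, bounded on the compact
support of the integrable function `ψ`. -/
lemma integrable_core {Xd E : Type*} [TopologicalSpace Xd] [MeasurableSpace Xd]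
    [BorelSpace Xd] [NormedAddCommGroup E] [NormedSpace ℂ E]
    {μ : Measure Xd} {ψ : Xd → ℂ} (hψ : Integrable ψ μ)
    {g : Xd → E} (hg : Continuous g) {c : ℝ}
    (hbound : ∀ k ∈ tsupport ψ, ‖g k‖ ≤ c) (hQ : IsCompact (tsupport ψ)) :
    Integrable (fun k => ψ k • g k) μ := by
  have hsm : StronglyMeasurable ((tsupport ψ).indicator g) := by
    letI : MeasurableSpace E := borel E
    haveI : BorelSpace E := ⟨rfl⟩
    rw [stronglyMeasurable_iff_measurable_separable]
    constructor
    · exact (hg.measurable).indicator (isClosed_tsupport ψ).measurableSet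
    · have hsub : Set.range ((tsupport ψ).indicator g) ⊆
          insert 0 (g '' tsupport ψ) := by
        rintro x ⟨k, rfl⟩
        by_cases hk : k ∈ tsupport ψ
        · rw [Set.indicator_of_mem hk]
          exact Set.mem_insert_of_mem _ ⟨k, hk, rfl⟩
        · rw [Set.indicator_of_notMem hk]
          exact Set.mem_insert _ _
      refine TopologicalSpace.IsSeparable.mono ?_ hsub
      rw [Set.insert_eq]
      exact ((Set.countable_singleton (0 : E)).isSeparable).union
        ((hQ.image hg).isSeparable)
  have heq : (fun k => ψ k • g k)
      = fun k => ψ k • ((tsupport ψ).indicator g k) := by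
    funext k
    by_cases hk : k ∈ tsupport ψ
    · rw [Set.indicator_of_mem hk]
    · rw [image_eq_zero_of_notMem_tsupport hk, zero_smul, zero_smul]
  refine Integrable.mono' (hψ.norm.mul_const c) ?_
    (Filter.Eventually.of_forall (norm_smul_le_of_bound hbound))
  rw [heq]
  exact hψ.aestronglyMeasurable.smul hsm.aestronglyMeasurable

/-- Integrability of the defining integrand of `ψ(V) u`. -/
lemma GroupRep.integrable_smul {Xd E : Type*} [Monoid Xd] [TopologicalSpace Xd]
    [MeasurableSpace Xd] [BorelSpace Xd]
    [NormedAddCommGroup E] [NormedSpace ℂ E] [CompleteSpace E]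
    (W : GroupRep Xd E) (μ : Measure Xd) {ψ : Xd → ℂ}
    (hψ : Integrable ψ μ) (hcs : HasCompactSupport ψ) (u : E) :
    Integrable (fun k => ψ k • (↑(W.V k) : E →L[ℂ] E) u) μ := by
  obtain ⟨c, hc0, hbc⟩ := W.bound hcs
  refine integrable_core hψ (W.strong_cont u) (c := c * ‖u‖) (fun k hk => ?_) hcs
  exact le_trans ((↑(W.V k) : E →L[ℂ] E).le_opNorm u)
    (mul_le_mul_of_nonneg_right (hbc k hk) (norm_nonneg u))

/-- Continuity of `k ↦ V k (v k)` for a strongly continuous representation on a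
locally compact space and a continuous vector family. -/
lemma GroupRep.continuous_apply_comp {Xd E : Type*} [Monoid Xd] [TopologicalSpace Xd]
    [LocallyCompactSpace Xd] [NormedAddCommGroup E] [NormedSpace ℂ E] [CompleteSpace E]
    (W : GroupRep Xd E) {v : Xd → E} (hv : Continuous v) :
    Continuous fun k => (↑(W.V k) : E →L[ℂ] E) (v k) := by
  rw [continuous_iff_continuousAt]
  intro k₀
  obtain ⟨N, hNc, hNn⟩ := exists_compact_mem_nhds k₀
  obtain ⟨c, hc0, hbc⟩ := W.bound hNc
  have h1 : Filter.Tendsto (fun k => (↑(W.V k) : E →L[ℂ] E) (v k - v k₀)) (𝓝 k₀) (𝓝 0) := by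
    have hg : Filter.Tendsto (fun k => c * ‖v k - v k₀‖) (𝓝 k₀) (𝓝 0) := by
      have hcont : Continuous (fun k => c * ‖v k - v k₀‖) :=
        continuous_const.mul ((hv.sub continuous_const).norm)
      have := hcont.tendsto k₀
      simpa using this
    refine squeeze_zero_norm' ?_ hg
    filter_upwards [hNn] with k hk
    exact le_trans ((↑(W.V k) : E →L[ℂ] E).le_opNorm _)
      (mul_le_mul_of_nonneg_right (hbc k hk) (norm_nonneg _))
  have h2 := (W.strong_cont (v k₀)).tendsto k₀
  have h3 := h1.add h2
  rw [zero_add] at h3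
  have heq : (fun k => (↑(W.V k) : E →L[ℂ] E) (v k - v k₀)
      + (↑(W.V k) : E →L[ℂ] E) (v k₀)) = fun k => (↑(W.V k) : E →L[ℂ] E) (v k) := by
    funext k
    rw [map_sub, sub_add_cancel]
  rwa [heq] at h3

/-- Existence of the operator `ψ(V)`. -/
lemma exists_intOp {Xd E : Type*} [Monoid Xd] [TopologicalSpace Xd]
    [MeasurableSpace Xd] [BorelSpace Xd]
    [NormedAddCommGroup E] [NormedSpace ℂ E] [CompleteSpace E]
    (W : GroupRep Xd E) (μ : Measure Xd) {ψ : Xd → ℂ}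
    (hψ : Integrable ψ μ) (hcs : HasCompactSupport ψ) :
    ∃ A : E →L[ℂ] E, ∀ u, A u = ∫ k, ψ k • (↑(W.V k) : E →L[ℂ] E) u ∂μ := by
  obtain ⟨c, hc0, hbc⟩ := W.bound hcs
  have hint := W.integrable_smul μ hψ hcs
  refine ⟨LinearMap.mkContinuous
    { toFun := fun u => ∫ k, ψ k • (↑(W.V k) : E →L[ℂ] E) u ∂μ
      map_add' := fun u v => by
        have hk : ∀ k, ψ k • (↑(W.V k) : E →L[ℂ] E) (u + v)
            = ψ k • (↑(W.V k) : E →L[ℂ] E) u + ψ k • (↑(W.V k) : E →L[ℂ] E) v := fun k => by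
          rw [ContinuousLinearMap.map_add, smul_add]
        show (∫ k, ψ k • (↑(W.V k) : E →L[ℂ] E) (u + v) ∂μ) = _
        simp_rw [hk]
        exact integral_add (hint u) (hint v)
      map_smul' := fun a u => by
        have hk : ∀ k, ψ k • (↑(W.V k) : E →L[ℂ] E) (a • u)
            = a • (ψ k • (↑(W.V k) : E →L[ℂ] E) u) := fun k => by
          rw [ContinuousLinearMap.map_smul, smul_comm]
        show (∫ k, ψ k • (↑(W.V k) : E →L[ℂ] E) (a • u) ∂μ) = _
        simp_rw [hk, RingHom.id_apply]
        exact integral_smul a _ }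
    ((∫ k, ‖ψ k‖ ∂μ) * c) (fun u => ?_), fun u => rfl⟩
  simp only [LinearMap.coe_mk, AddHom.coe_mk]
  have hb : ∀ k, ‖ψ k • (↑(W.V k) : E →L[ℂ] E) u‖ ≤ ‖ψ k‖ * (c * ‖u‖) := by
    refine norm_smul_le_of_bound fun k hk => ?_
    exact le_trans ((↑(W.V k) : E →L[ℂ] E).le_opNorm u)
      (mul_le_mul_of_nonneg_right (hbc k hk) (norm_nonneg u))
  calc ‖∫ k, ψ k • (↑(W.V k) : E →L[ℂ] E) u ∂μ‖
      ≤ ∫ k, ‖ψ k‖ * (c * ‖u‖) ∂μ :=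
        norm_integral_le_of_norm_le (hψ.norm.mul_const _) (Eventually.of_forall hb)
    _ = (∫ k, ‖ψ k‖ ∂μ) * (c * ‖u‖) := integral_mul_const _ _
    _ = (∫ k, ‖ψ k‖ ∂μ) * c * ‖u‖ := by ring

/-- Master approximation lemma (left version). -/
lemma masterL {Xd : Type*} [Monoid Xd] [TopologicalSpace Xd] [LocallyCompactSpace Xd]
    [MeasurableSpace Xd] [BorelSpace Xd]
    {H K : Type*} [NormedAddCommGroup H] [NormedSpace ℂ H]
    [NormedAddCommGroup K] [NormedSpace ℂ K] [CompleteSpace K]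
    (W : GroupRep Xd K) (μ : Measure Xd)
    {F : Xd → (H →L[ℂ] K)} (hF : Continuous F) {ψ : Xd → ℂ}
    (hψ : Integrable ψ μ) (hcs : HasCompactSupport ψ)
    {C : H →L[ℂ] K} (hC : ∀ u, C u = ∫ k, ψ k • (↑(W.V k) : K →L[ℂ] K) (F k u) ∂μ) :
    C ∈ B0l (H := H) (repMult W μ) := by
  have hQ : IsCompact (tsupport ψ) := hcs
  obtain ⟨cV, hcV0, hbV⟩ := W.bound hQ
  obtain ⟨cF, hcF0, hbF⟩ : ∃ c, 0 ≤ c ∧ ∀ k ∈ tsupport ψ, ‖F k‖ ≤ c := by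
    obtain ⟨c, hc⟩ := (hQ.image hF.norm).bddAbove
    exact ⟨max c 0, le_max_right _ _, fun k hk =>
      le_trans (hc (Set.mem_image_of_mem _ hk)) (le_max_left _ _)⟩
  rw [B0l, Metric.mem_closure_iff]
  intro ε hε
  set I := ∫ k, ‖ψ k‖ ∂μ with hI
  have hI0 : 0 ≤ I := integral_nonneg fun k => norm_nonneg _
  have hpos : (0 : ℝ) < cV * I + 1 := by positivity
  set δ := ε / (cV * I + 1) with hδdef
  have hδ : 0 < δ := div_pos hε hpos
  obtain ⟨n, p, Ω, hmeas, hΩQ, hpQ, hdisj, hcov, hdist⟩ := exists_partition hQ hF hδ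
  set ψi : Fin n → Xd → ℂ := fun i => (Ω i).indicator ψ with hψidef
  have hψiInt : ∀ i, Integrable (ψi i) μ := fun i => hψ.indicator (hmeas i)
  have hψits : ∀ i, tsupport (ψi i) ⊆ tsupport ψ := fun i =>
    closure_minimal (Set.support_indicator_subset.trans (hΩQ i)) (isClosed_tsupport ψ)
  have hψics : ∀ i, HasCompactSupport (ψi i) := fun i =>
    IsCompact.of_isClosed_subset hQ (isClosed_tsupport _) (hψits i)
  choose A hA using fun i => exists_intOp W μ (hψiInt i) (hψics i)
  have hmem : ∀ i, A i ∈ repMult W μ := fun i =>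
    subset_closure ⟨ψi i, hψiInt i, hψics i, hA i⟩
  set B := ∑ i, (A i).comp (F (p i)) with hB
  have hsupp : ∀ x, ψ x ≠ 0 → x ∈ tsupport ψ := fun x hx => subset_closure hx
  have hsupp' : ∀ x, ‖ψ x‖ ≠ 0 → x ∈ tsupport ψ := fun x hx =>
    hsupp x (norm_ne_zero_iff.mp hx)
  -- analytic preliminaries
  have hcont : ∀ u : H, Continuous fun k => (↑(W.V k) : K →L[ℂ] K) (F k u) :=
    fun u => W.continuous_apply_comp (hF.clm_apply continuous_const)
  have hFu : ∀ u : H, ∀ k ∈ tsupport ψ, ‖F k u‖ ≤ cF * ‖u‖ := fun u k hk =>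
    le_trans ((F k).le_opNorm u) (mul_le_mul_of_nonneg_right (hbF k hk) (norm_nonneg u))
  have hbound1 : ∀ u : H, ∀ k ∈ tsupport ψ,
      ‖(↑(W.V k) : K →L[ℂ] K) (F k u)‖ ≤ cV * (cF * ‖u‖) := fun u k hk =>
    le_trans ((↑(W.V k) : K →L[ℂ] K).le_opNorm _)
      (mul_le_mul (hbV k hk) (hFu u k hk) (norm_nonneg _) hcV0)
  have hfi_int : ∀ i (u : H),
      Integrable (fun k => ψi i k • (↑(W.V k) : K →L[ℂ] K) (F k u)) μ := fun i u =>
    integrable_core (hψiInt i) (hcont u) (fun k hk => hbound1 u k (hψits i hk)) (hψics i)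
  have hgi_int : ∀ i (u : H),
      Integrable (fun k => ψi i k • (↑(W.V k) : K →L[ℂ] K) (F (p i) u)) μ := fun i u =>
    integrable_core (hψiInt i) (W.strong_cont _) (c := cV * (cF * ‖u‖))
      (fun k hk => le_trans ((↑(W.V k) : K →L[ℂ] K).le_opNorm _)
        (mul_le_mul (hbV k (hψits i hk)) (hFu u (p i) (hpQ i)) (norm_nonneg _) hcV0))
      (hψics i)
  refine ⟨B, ?_, ?_⟩
  · exact Submodule.sum_mem _ fun i _ => Submodule.subset_span ⟨A i, hmem i, F (p i), rfl⟩
  · rw [dist_eq_norm]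
    have hnorm : ∀ u : H, ‖(C - B) u‖ ≤ cV * I * δ * ‖u‖ := by
      intro u
      have hCu : C u = ∑ i, ∫ k, ψi i k • (↑(W.V k) : K →L[ℂ] K) (F k u) ∂μ := by
        rw [hC u, ← integral_finset_sum _ (fun i _ => hfi_int i u)]
        congr 1; funext k
        rw [← Finset.sum_smul, sum_indicator_eq hdisj hsupp hcov k]
      have hBu : B u = ∑ i, ∫ k, ψi i k • (↑(W.V k) : K →L[ℂ] K) (F (p i) u) ∂μ := by
        rw [hB]
        rw [ContinuousLinearMap.sum_apply]
        exact Finset.sum_congr rfl fun i _ => hA i _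
      rw [ContinuousLinearMap.sub_apply, hCu, hBu, ← Finset.sum_sub_distrib]
      refine le_trans (norm_sum_le _ _) ?_
      have hterm : ∀ i,
          ‖(∫ k, ψi i k • (↑(W.V k) : K →L[ℂ] K) (F k u) ∂μ)
            - ∫ k, ψi i k • (↑(W.V k) : K →L[ℂ] K) (F (p i) u) ∂μ‖
          ≤ ∫ k, ‖ψi i k‖ * (cV * (δ * ‖u‖)) ∂μ := by
        intro i
        rw [← integral_sub (hfi_int i u) (hgi_int i u)]
        refine norm_integral_le_of_norm_le ((hψiInt i).norm.mul_const _)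
          (Filter.Eventually.of_forall fun k => ?_)
        have heq : ψi i k • (↑(W.V k) : K →L[ℂ] K) (F k u)
            - ψi i k • (↑(W.V k) : K →L[ℂ] K) (F (p i) u)
            = ψi i k • (↑(W.V k) : K →L[ℂ] K) ((F k - F (p i)) u) := by
          rw [← smul_sub, ← map_sub]
          congr 1
        rw [heq, norm_smul]
        by_cases hk0 : ψi i k = 0
        · rw [hk0]
          simp only [norm_zero, zero_mul]
          positivity
        · have hkΩ : k ∈ Ω i := by
            by_contra h
            exact hk0 (Set.indicator_of_notMem h ψ)
          have hkQ : k ∈ tsupport ψ := hΩQ i hkΩ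
          refine mul_le_mul_of_nonneg_left ?_ (norm_nonneg _)
          calc ‖(↑(W.V k) : K →L[ℂ] K) ((F k - F (p i)) u)‖
              ≤ cV * ‖(F k - F (p i)) u‖ :=
                le_trans ((↑(W.V k) : K →L[ℂ] K).le_opNorm _)
                  (mul_le_mul_of_nonneg_right (hbV k hkQ) (norm_nonneg _))
            _ ≤ cV * (δ * ‖u‖) := by
                refine mul_le_mul_of_nonneg_left ?_ hcV0
                exact le_trans ((F k - F (p i)).le_opNorm u)
                  (mul_le_mul_of_nonneg_right (hdist i k hkΩ) (norm_nonneg u))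
      refine le_trans (Finset.sum_le_sum fun i _ => hterm i) ?_
      have hsum2 : ∑ i, ∫ k, ‖ψi i k‖ * (cV * (δ * ‖u‖)) ∂μ
          = (∑ i, ∫ k, ‖ψi i k‖ ∂μ) * (cV * (δ * ‖u‖)) := by
        simp_rw [integral_mul_const]
        rw [Finset.sum_mul]
      have hsum3 : ∑ i, ∫ k, ‖ψi i k‖ ∂μ = I := by
        rw [hI, ← integral_finset_sum _ (fun i _ => (hψiInt i).norm)]
        congr 1; funext k
        have : ∀ i, ‖ψi i k‖ = (Ω i).indicator (fun x => ‖ψ x‖) k := fun i =>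
          norm_indicator_eq_indicator_norm ψ k
        simp_rw [this]
        exact sum_indicator_eq hdisj hsupp' hcov k
      rw [hsum2, hsum3]
      exact le_of_eq (by ring)
    refine lt_of_le_of_lt (ContinuousLinearMap.opNorm_le_bound _ (by positivity) hnorm) ?_
    rw [hδdef]
    have heq : cV * I * (ε / (cV * I + 1)) = cV * I * ε / (cV * I + 1) := by ring
    rw [heq, div_lt_iff₀ hpos]
    nlinarith

/-- Master approximation lemma (right version). -/
lemma masterR {Xd : Type*} [Monoid Xd] [TopologicalSpace Xd]
    [MeasurableSpace Xd] [BorelSpace Xd]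
    {H K : Type*} [NormedAddCommGroup H] [NormedSpace ℂ H] [CompleteSpace H]
    [NormedAddCommGroup K] [NormedSpace ℂ K] [CompleteSpace K]
    (W : GroupRep Xd H) (μ : Measure Xd)
    {F : Xd → (H →L[ℂ] K)} (hF : Continuous F) {ψ : Xd → ℂ}
    (hψ : Integrable ψ μ) (hcs : HasCompactSupport ψ)
    {C : H →L[ℂ] K} (hC : ∀ u, C u = ∫ k, ψ k • F k ((↑(W.V k) : H →L[ℂ] H) u) ∂μ) :
    C ∈ B0r (K := K) (repMult W μ) := by
  have hQ : IsCompact (tsupport ψ) := hcs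
  obtain ⟨cV, hcV0, hbV⟩ := W.bound hQ
  obtain ⟨cF, hcF0, hbF⟩ : ∃ c, 0 ≤ c ∧ ∀ k ∈ tsupport ψ, ‖F k‖ ≤ c := by
    obtain ⟨c, hc⟩ := (hQ.image hF.norm).bddAbove
    exact ⟨max c 0, le_max_right _ _, fun k hk =>
      le_trans (hc (Set.mem_image_of_mem _ hk)) (le_max_left _ _)⟩
  rw [B0r, Metric.mem_closure_iff]
  intro ε hε
  set I := ∫ k, ‖ψ k‖ ∂μ with hI
  have hI0 : 0 ≤ I := integral_nonneg fun k => norm_nonneg _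
  have hpos : (0 : ℝ) < cV * I + 1 := by positivity
  set δ := ε / (cV * I + 1) with hδdef
  have hδ : 0 < δ := div_pos hε hpos
  obtain ⟨n, p, Ω, hmeas, hΩQ, hpQ, hdisj, hcov, hdist⟩ := exists_partition hQ hF hδ
  set ψi : Fin n → Xd → ℂ := fun i => (Ω i).indicator ψ with hψidef
  have hψiInt : ∀ i, Integrable (ψi i) μ := fun i => hψ.indicator (hmeas i)
  have hψits : ∀ i, tsupport (ψi i) ⊆ tsupport ψ := fun i =>
    closure_minimal (Set.support_indicator_subset.trans (hΩQ i)) (isClosed_tsupport ψ)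
  have hψics : ∀ i, HasCompactSupport (ψi i) := fun i =>
    IsCompact.of_isClosed_subset hQ (isClosed_tsupport _) (hψits i)
  choose A hA using fun i => exists_intOp W μ (hψiInt i) (hψics i)
  have hmem : ∀ i, A i ∈ repMult W μ := fun i =>
    subset_closure ⟨ψi i, hψiInt i, hψics i, hA i⟩
  set B := ∑ i, (F (p i)).comp (A i) with hB
  have hsupp : ∀ x, ψ x ≠ 0 → x ∈ tsupport ψ := fun x hx => subset_closure hx
  have hsupp' : ∀ x, ‖ψ x‖ ≠ 0 → x ∈ tsupport ψ := fun x hx =>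
    hsupp x (norm_ne_zero_iff.mp hx)
  have hVu : ∀ u : H, ∀ k ∈ tsupport ψ, ‖(↑(W.V k) : H →L[ℂ] H) u‖ ≤ cV * ‖u‖ :=
    fun u k hk => le_trans ((↑(W.V k) : H →L[ℂ] H).le_opNorm u)
      (mul_le_mul_of_nonneg_right (hbV k hk) (norm_nonneg u))
  have hcont : ∀ u : H, Continuous fun k => F k ((↑(W.V k) : H →L[ℂ] H) u) :=
    fun u => hF.clm_apply (W.strong_cont u)
  have hfi_int : ∀ i (u : H),
      Integrable (fun k => ψi i k • F k ((↑(W.V k) : H →L[ℂ] H) u)) μ := fun i u =>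
    integrable_core (hψiInt i) (hcont u) (c := cF * (cV * ‖u‖))
      (fun k hk => le_trans ((F k).le_opNorm _)
        (mul_le_mul (hbF k (hψits i hk)) (hVu u k (hψits i hk)) (norm_nonneg _) hcF0))
      (hψics i)
  have hVi_int : ∀ i (u : H),
      Integrable (fun k => ψi i k • (↑(W.V k) : H →L[ℂ] H) u) μ := fun i u =>
    W.integrable_smul μ (hψiInt i) (hψics i) u
  have hgi_int : ∀ i (u : H),
      Integrable (fun k => ψi i k • F (p i) ((↑(W.V k) : H →L[ℂ] H) u)) μ := fun i u =>
    integrable_core (hψiInt i) ((F (p i)).continuous.comp (W.strong_cont u))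
      (c := cF * (cV * ‖u‖))
      (fun k hk => le_trans ((F (p i)).le_opNorm _)
        (mul_le_mul (hbF (p i) (hpQ i)) (hVu u k (hψits i hk)) (norm_nonneg _) hcF0))
      (hψics i)
  refine ⟨B, ?_, ?_⟩
  · exact Submodule.sum_mem _ fun i _ => Submodule.subset_span ⟨A i, hmem i, F (p i), rfl⟩
  · rw [dist_eq_norm]
    have hnorm : ∀ u : H, ‖(C - B) u‖ ≤ cV * I * δ * ‖u‖ := by
      intro u
      have hCu : C u = ∑ i, ∫ k, ψi i k • F k ((↑(W.V k) : H →L[ℂ] H) u) ∂μ := by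
        rw [hC u, ← integral_finset_sum _ (fun i _ => hfi_int i u)]
        congr 1; funext k
        rw [← Finset.sum_smul, sum_indicator_eq hdisj hsupp hcov k]
      have hBu : B u = ∑ i, ∫ k, ψi i k • F (p i) ((↑(W.V k) : H →L[ℂ] H) u) ∂μ := by
        rw [hB, ContinuousLinearMap.sum_apply]
        refine Finset.sum_congr rfl fun i _ => ?_
        rw [ContinuousLinearMap.comp_apply, hA i u,
          ← ContinuousLinearMap.integral_comp_comm _ (hVi_int i u)]
        congr 1; funext k
        rw [ContinuousLinearMap.map_smul]
      rw [ContinuousLinearMap.sub_apply, hCu, hBu, ← Finset.sum_sub_distrib]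
      refine le_trans (norm_sum_le _ _) ?_
      have hterm : ∀ i,
          ‖(∫ k, ψi i k • F k ((↑(W.V k) : H →L[ℂ] H) u) ∂μ)
            - ∫ k, ψi i k • F (p i) ((↑(W.V k) : H →L[ℂ] H) u) ∂μ‖
          ≤ ∫ k, ‖ψi i k‖ * (δ * (cV * ‖u‖)) ∂μ := by
        intro i
        rw [← integral_sub (hfi_int i u) (hgi_int i u)]
        refine norm_integral_le_of_norm_le ((hψiInt i).norm.mul_const _)
          (Filter.Eventually.of_forall fun k => ?_)
        have heq : ψi i k • F k ((↑(W.V k) : H →L[ℂ] H) u)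
            - ψi i k • F (p i) ((↑(W.V k) : H →L[ℂ] H) u)
            = ψi i k • ((F k - F (p i)) ((↑(W.V k) : H →L[ℂ] H) u)) := by
          rw [← smul_sub]
          congr 1
        rw [heq, norm_smul]
        by_cases hk0 : ψi i k = 0
        · rw [hk0]
          simp only [norm_zero, zero_mul]
          positivity
        · have hkΩ : k ∈ Ω i := by
            by_contra h
            exact hk0 (Set.indicator_of_notMem h ψ)
          have hkQ : k ∈ tsupport ψ := hΩQ i hkΩ
          refine mul_le_mul_of_nonneg_left ?_ (norm_nonneg _)
          exact le_trans ((F k - F (p i)).le_opNorm _)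
            (mul_le_mul (hdist i k hkΩ) (hVu u k hkQ) (norm_nonneg _) hδ.le)
      refine le_trans (Finset.sum_le_sum fun i _ => hterm i) ?_
      have hsum2 : ∑ i, ∫ k, ‖ψi i k‖ * (δ * (cV * ‖u‖)) ∂μ
          = (∑ i, ∫ k, ‖ψi i k‖ ∂μ) * (δ * (cV * ‖u‖)) := by
        simp_rw [integral_mul_const]
        rw [Finset.sum_mul]
      have hsum3 : ∑ i, ∫ k, ‖ψi i k‖ ∂μ = I := by
        rw [hI, ← integral_finset_sum _ (fun i _ => (hψiInt i).norm)]
        congr 1; funext k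
        have : ∀ i, ‖ψi i k‖ = (Ω i).indicator (fun x => ‖ψ x‖) k := fun i =>
          norm_indicator_eq_indicator_norm ψ k
        simp_rw [this]
        exact sum_indicator_eq hdisj hsupp' hcov k
      rw [hsum2, hsum3]
      exact le_of_eq (by ring)
    refine lt_of_le_of_lt (ContinuousLinearMap.opNorm_le_bound _ (by positivity) hnorm) ?_
    rw [hδdef]
    have heq : cV * I * (ε / (cV * I + 1)) = cV * I * ε / (cV * I + 1) := by ring
    rw [heq, div_lt_iff₀ hpos]
    nlinarith

lemma unit_inv_apply_cancel {E : Type*} [NormedAddCommGroup E] [NormedSpace ℂ E]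
    (a : (E →L[ℂ] E)ˣ) (x : E) :
    (↑a : E →L[ℂ] E) ((↑a⁻¹ : E →L[ℂ] E) x) = x := by
  rw [← ContinuousLinearMap.mul_apply, Units.mul_inv, ContinuousLinearMap.one_apply]

lemma GroupRep.inv_apply_cancel {Xd E : Type*} [Group Xd] [TopologicalSpace Xd]
    [NormedAddCommGroup E] [NormedSpace ℂ E]
    (W : GroupRep Xd E) (k : Xd) (u : E) :
    (↑(W.V k⁻¹) : E →L[ℂ] E) ((↑(W.V k) : E →L[ℂ] E) u) = u := by
  rw [← ContinuousLinearMap.mul_apply, ← Units.val_mul, ← map_mul, inv_mul_cancel,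
    map_one, Units.val_one, ContinuousLinearMap.one_apply]

end Auxiliary

/-- Operators of class `C^u(Q)` between Banach `X`-modules over the
group `X` are decay preserving (with respect to the canonical multiplier algebras,
defined via a Haar measure on the dual group). -/
theorem stmt8 {X : Type*} [TopologicalSpace X] [CommGroup X] [IsTopologicalGroup X]
    [LocallyCompactSpace X] [T2Space X] [NoncompactSpace X]
    [MeasurableSpace (PontryaginDual X)] [BorelSpace (PontryaginDual X)]
    (μ : Measure (PontryaginDual X)) [μ.IsHaarMeasure]
    {H K : Type*} [NormedAddCommGroup H] [NormedSpace ℂ H] [CompleteSpace H]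
    [NormedAddCommGroup K] [NormedSpace ℂ K] [CompleteSpace K]
    (WH : GroupRep (PontryaginDual X) H) (WK : GroupRep (PontryaginDual X) K)
    (T : H →L[ℂ] K) (hT : CuClass WH WK T) :
    LeftDecayPreserving (repMult WH μ) (repMult WK μ) T ∧
    RightDecayPreserving (repMult WH μ) (repMult WK μ) T := by
  have hS : Continuous fun k : PontryaginDual X =>
      (↑(WK.V k)⁻¹ : K →L[ℂ] K).comp (T.comp (↑(WH.V k) : H →L[ℂ] H)) := hT
  constructor
  · -- Left decay preserving
    intro A hA
    have hclosed : IsClosed (B0l (H := H) (repMult WK μ)) := by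
      unfold B0l; exact isClosed_closure
    have hgen : {A₀ : H →L[ℂ] H | ∃ ψ : PontryaginDual X → ℂ, Integrable ψ μ ∧
          HasCompactSupport ψ ∧
          ∀ u : H, A₀ u = ∫ k, ψ k • ((↑(WH.V k) : H →L[ℂ] H) u) ∂μ}
        ⊆ (fun A₀ : H →L[ℂ] H => T.comp A₀) ⁻¹' (B0l (H := H) (repMult WK μ)) := by
      rintro A₀ ⟨ψ, hψ, hcs, hval⟩
      refine Set.mem_preimage.mpr (masterL WK μ hS hψ hcs ?_)
      intro u
      rw [ContinuousLinearMap.comp_apply, hval u,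
        ← ContinuousLinearMap.integral_comp_comm T (WH.integrable_smul μ hψ hcs u)]
      congr 1; funext k
      rw [ContinuousLinearMap.map_smul]
      congr 1
      show T ((↑(WH.V k) : H →L[ℂ] H) u) = (↑(WK.V k) : K →L[ℂ] K)
        (((↑(WK.V k)⁻¹ : K →L[ℂ] K).comp
          (T.comp (↑(WH.V k) : H →L[ℂ] H))) u)
      rw [ContinuousLinearMap.comp_apply, ContinuousLinearMap.comp_apply,
        unit_inv_apply_cancel]
    have hcontc : Continuous fun A₀ : H →L[ℂ] H => T.comp A₀ :=
      ((ContinuousLinearMap.compL ℂ H H K) T).continuous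
    exact closure_minimal hgen (hclosed.preimage hcontc) hA
  · -- Right decay preserving
    intro A hA
    have hclosed : IsClosed (B0r (K := K) (repMult WH μ)) := by
      unfold B0r; exact isClosed_closure
    have hgen : {A₀ : K →L[ℂ] K | ∃ ψ : PontryaginDual X → ℂ, Integrable ψ μ ∧
          HasCompactSupport ψ ∧
          ∀ u : K, A₀ u = ∫ k, ψ k • ((↑(WK.V k) : K →L[ℂ] K) u) ∂μ}
        ⊆ (fun A₀ : K →L[ℂ] K => A₀.comp T) ⁻¹' (B0r (K := K) (repMult WH μ)) := by
      rintro A₀ ⟨ψ, hψ, hcs, hval⟩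
      refine Set.mem_preimage.mpr (masterR WH μ
        (F := fun k : PontryaginDual X => (↑(WK.V k⁻¹)⁻¹ : K →L[ℂ] K).comp
          (T.comp (↑(WH.V k⁻¹) : H →L[ℂ] H)))
        (hS.comp continuous_inv) hψ hcs ?_)
      intro u
      rw [ContinuousLinearMap.comp_apply, hval (T u)]
      congr 1; funext k
      congr 1
      show (↑(WK.V k) : K →L[ℂ] K) (T u)
          = ((↑(WK.V k⁻¹)⁻¹ : K →L[ℂ] K).comp
            (T.comp (↑(WH.V k⁻¹) : H →L[ℂ] H))) ((↑(WH.V k) : H →L[ℂ] H) u)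
      rw [ContinuousLinearMap.comp_apply, ContinuousLinearMap.comp_apply,
        WH.inv_apply_cancel, map_inv, inv_inv]
    have hcontc : Continuous fun A₀ : K →L[ℂ] K => A₀.comp T :=
      ((ContinuousLinearMap.compL ℂ H K K).flip T).continuous
    exact closure_minimal hgen (hclosed.preimage hcontc) hA

end
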